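/- Let G be a locally compact Abelian group that is non torsion (i.e. contains an element of infinite order) and such that there exists a continuous translation invariant strictly positive definite scalar valued kernel on G (i.e. P⁺(G,ℂ) is nonempty). Then for every ℓ ≥ 2 the inclusion P⁺(G,ℂ^ℓ) ⊆ P⁺_proj(G,ℂ^ℓ) is strict. -/

import Mathlib

open scoped ComplexOrder

/-- Complex "inner product" on finite tuples, linear in the first argument and
conjugate-linear in the second: `cip v w = ∑ i, v i * conj (w i)`. -/
noncomputable def cip {ι : Type*} [Fintype ι] (v w : ι → ℂ) : ℂ :=
  ∑ i, v i * (starRingEnd ℂ) (w i)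

/-- A matrix valued kernel is positive definite. -/
def IsPDMat {X : Type*} {ℓ : ℕ} (K : X → X → Matrix (Fin ℓ) (Fin ℓ) ℂ) : Prop :=
  ∀ (n : ℕ) (x : Fin n → X), Function.Injective x →
    ∀ v : Fin n → Fin ℓ → ℂ,
      0 ≤ ∑ μ : Fin n, ∑ ν : Fin n, cip ((K (x μ) (x ν)).mulVec (v μ)) (v ν)

/-- A matrix valued kernel is strictly positive definite. -/
def IsSPDMat {X : Type*} {ℓ : ℕ} (K : X → X → Matrix (Fin ℓ) (Fin ℓ) ℂ) : Prop :=
  ∀ (n : ℕ) (x : Fin n → X), Function.Injective x →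
    ∀ v : Fin n → Fin ℓ → ℂ, (∃ μ, v μ ≠ 0) →
      0 < ∑ μ : Fin n, ∑ ν : Fin n, cip ((K (x μ) (x ν)).mulVec (v μ)) (v ν)

/-- A scalar valued kernel is positive definite. -/
def IsPDKer {X : Type*} (k : X → X → ℂ) : Prop :=
  ∀ (n : ℕ) (x : Fin n → X), Function.Injective x →
    ∀ c : Fin n → ℂ,
      0 ≤ ∑ μ : Fin n, ∑ ν : Fin n, c μ * (starRingEnd ℂ) (c ν) * k (x μ) (x ν)

/-- A scalar valued kernel is strictly positive definite. -/
def IsSPDKer {X : Type*} (k : X → X → ℂ) : Prop :=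
  ∀ (n : ℕ) (x : Fin n → X), Function.Injective x →
    ∀ c : Fin n → ℂ, (∃ μ, c μ ≠ 0) →
      0 < ∑ μ : Fin n, ∑ ν : Fin n, c μ * (starRingEnd ℂ) (c ν) * k (x μ) (x ν)

/-- The scalar valued projection `K_v(x,y) = ⟨K(x,y)v, v⟩` of a matrix valued kernel. -/
noncomputable def projKer {X : Type*} {ℓ : ℕ} (K : X → X → Matrix (Fin ℓ) (Fin ℓ) ℂ)
    (v : Fin ℓ → ℂ) : X → X → ℂ :=
  fun x y => cip ((K x y).mulVec v) v

/-! ### Auxiliary material for the proof -/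

/-- The matrix valued kernel `K(x,y)_{ji} = k(x g^i, y g^j)` built from a scalar kernel `k`
and a fixed group element `g`. -/
noncomputable def Kmat {G : Type*} [CommGroup G] (k : G → G → ℂ) (g : G) (ℓ : ℕ) :
    G → G → Matrix (Fin ℓ) (Fin ℓ) ℂ :=
  fun x y => Matrix.of fun j i => k (x * g ^ (i : ℕ)) (y * g ^ (j : ℕ))

lemma cip_mulVec {ℓ : ℕ} (M : Matrix (Fin ℓ) (Fin ℓ) ℂ) (u w : Fin ℓ → ℂ) :
    cip (M.mulVec u) w = ∑ j, ∑ i, u i * (starRingEnd ℂ) (w j) * M j i := by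
  unfold cip
  refine Finset.sum_congr rfl fun j _ => ?_
  rw [Matrix.mulVec, dotProduct, Finset.sum_mul]
  exact Finset.sum_congr rfl fun i _ => by ring

lemma cip_smul_smul {ℓ : ℕ} (M : Matrix (Fin ℓ) (Fin ℓ) ℂ) (v w : Fin ℓ → ℂ) (a b : ℂ) :
    cip (M.mulVec (a • v)) (b • w) = a * (starRingEnd ℂ) b * cip (M.mulVec v) w := by
  unfold cip
  rw [Matrix.mulVec_smul, Finset.mul_sum]
  refine Finset.sum_congr rfl fun i _ => ?_
  simp only [Pi.smul_apply, smul_eq_mul, map_mul]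
  ring

lemma expand_sum {G : Type*} [CommGroup G] {ℓ n : ℕ} (k : G → G → ℂ) (g : G)
    (x : Fin n → G) (v : Fin n → Fin ℓ → ℂ) :
    ∑ μ, ∑ ν, cip (((Kmat k g ℓ) (x μ) (x ν)).mulVec (v μ)) (v ν)
      = ∑ a : Fin n × Fin ℓ, ∑ b : Fin n × Fin ℓ,
          v a.1 a.2 * (starRingEnd ℂ) (v b.1 b.2)
            * k (x a.1 * g ^ ((a.2 : ℕ))) (x b.1 * g ^ ((b.2 : ℕ))) := by
  rw [Fintype.sum_prod_type]
  refine Finset.sum_congr rfl fun μ _ => ?_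
  have h1 : ∀ ν : Fin n, cip (((Kmat k g ℓ) (x μ) (x ν)).mulVec (v μ)) (v ν)
      = ∑ j, ∑ i, v μ i * (starRingEnd ℂ) (v ν j) * k (x μ * g ^ (i:ℕ)) (x ν * g ^ (j:ℕ)) :=
    fun ν => cip_mulVec _ _ _
  calc ∑ ν, cip (((Kmat k g ℓ) (x μ) (x ν)).mulVec (v μ)) (v ν)
      = ∑ ν, ∑ j, ∑ i, v μ i * (starRingEnd ℂ) (v ν j) * k (x μ * g ^ (i:ℕ)) (x ν * g ^ (j:ℕ)) :=
        Finset.sum_congr rfl fun ν _ => h1 ν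
    _ = ∑ ν, ∑ i, ∑ j, v μ i * (starRingEnd ℂ) (v ν j) * k (x μ * g ^ (i:ℕ)) (x ν * g ^ (j:ℕ)) :=
        Finset.sum_congr rfl fun ν _ => Finset.sum_comm
    _ = ∑ i, ∑ ν, ∑ j, v μ i * (starRingEnd ℂ) (v ν j) * k (x μ * g ^ (i:ℕ)) (x ν * g ^ (j:ℕ)) :=
        Finset.sum_comm
    _ = _ := by
        refine Finset.sum_congr rfl fun i _ => ?_
        rw [Fintype.sum_prod_type]

lemma prodsum {ι : Type*} (s t : Finset ι) (f g : ι → ℂ) (c : ℂ) :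
    (∑ a ∈ s, f a) * (∑ b ∈ t, g b) * c = ∑ a ∈ s, ∑ b ∈ t, f a * g b * c := by
  rw [Finset.sum_mul, Finset.sum_mul]
  refine Finset.sum_congr rfl fun a _ => ?_
  rw [Finset.mul_sum, Finset.sum_mul]

lemma regroup {G : Type*} {ι : Type*} [Fintype ι] [DecidableEq G]
    (y : ι → G) (d : ι → ℂ) (k : G → G → ℂ) :
    ∑ a, ∑ b, d a * (starRingEnd ℂ) (d b) * k (y a) (y b)
      = ∑ p ∈ Finset.image y Finset.univ, ∑ q ∈ Finset.image y Finset.univ,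
          (∑ a ∈ Finset.univ.filter (fun a => y a = p), d a)
            * (starRingEnd ℂ) (∑ b ∈ Finset.univ.filter (fun b => y b = q), d b) * k p q := by
  rw [← Finset.sum_fiberwise_of_maps_to
      (fun a _ => Finset.mem_image_of_mem y (Finset.mem_univ a))
      (fun a => ∑ b, d a * (starRingEnd ℂ) (d b) * k (y a) (y b))]
  refine Finset.sum_congr rfl fun p _ => ?_
  have h1 : ∀ a ∈ Finset.univ.filter (fun a => y a = p),
      (∑ b, d a * (starRingEnd ℂ) (d b) * k (y a) (y b))
        = ∑ q ∈ Finset.image y Finset.univ, ∑ b ∈ Finset.univ.filter (fun b => y b = q),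
            d a * (starRingEnd ℂ) (d b) * k p (y b) := by
    intro a ha
    rw [(Finset.mem_filter.mp ha).2]
    exact (Finset.sum_fiberwise_of_maps_to
      (fun b _ => Finset.mem_image_of_mem y (Finset.mem_univ b)) _).symm
  rw [Finset.sum_congr rfl h1, Finset.sum_comm]
  refine Finset.sum_congr rfl fun q _ => ?_
  calc ∑ a ∈ Finset.univ.filter (fun a => y a = p),
        ∑ b ∈ Finset.univ.filter (fun b => y b = q),
          d a * (starRingEnd ℂ) (d b) * k p (y b)
      = ∑ a ∈ Finset.univ.filter (fun a => y a = p),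
        ∑ b ∈ Finset.univ.filter (fun b => y b = q),
          d a * (starRingEnd ℂ) (d b) * k p q := by
        refine Finset.sum_congr rfl fun a _ => Finset.sum_congr rfl fun b hb => ?_
        rw [(Finset.mem_filter.mp hb).2]
    _ = _ := by
        rw [map_sum]
        exact (prodsum _ _ _ _ _).symm

lemma spd_finset {X : Type*} {k : X → X → ℂ} (hk : IsSPDKer k) (s : Finset X)
    (C : X → ℂ) (h : ∃ p ∈ s, C p ≠ 0) :
    0 < ∑ p ∈ s, ∑ q ∈ s, C p * (starRingEnd ℂ) (C q) * k p q := by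
  classical
  obtain ⟨p0, hp0, hC⟩ := h
  set e := s.equivFin with he
  set x : Fin s.card → X := fun a => ((e.symm a : s) : X) with hxdef
  have hx : Function.Injective x := fun a b hab => by
    have := Subtype.val_injective hab
    exact e.symm.injective this
  have conv : ∀ f : X → ℂ, ∑ a : Fin s.card, f (x a) = ∑ p ∈ s, f p := by
    intro f
    rw [← Finset.sum_coe_sort s f]
    exact Equiv.sum_comp e.symm fun p : s => f (p : X)
  have hcc : ∃ μ, C (x μ) ≠ 0 := ⟨e ⟨p0, hp0⟩, by simpa [hxdef] using hC⟩
  have hpos := hk s.card x hx (fun a => C (x a)) hcc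
  have heq : (∑ μ : Fin s.card, ∑ ν : Fin s.card,
      C (x μ) * (starRingEnd ℂ) (C (x ν)) * k (x μ) (x ν))
      = ∑ p ∈ s, ∑ q ∈ s, C p * (starRingEnd ℂ) (C q) * k p q := by
    calc ∑ μ : Fin s.card, ∑ ν : Fin s.card,
          C (x μ) * (starRingEnd ℂ) (C (x ν)) * k (x μ) (x ν)
        = ∑ μ : Fin s.card, ∑ q ∈ s, C (x μ) * (starRingEnd ℂ) (C q) * k (x μ) q :=
          Finset.sum_congr rfl fun μ _ =>
            conv (fun q => C (x μ) * (starRingEnd ℂ) (C q) * k (x μ) q)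
      _ = _ := conv (fun p => ∑ q ∈ s, C p * (starRingEnd ℂ) (C q) * k p q)
  rw [← heq]
  exact hpos

lemma key_nonzero {G : Type*} [CommGroup G] [DecidableEq G] {g : G} (hg : ¬ IsOfFinOrder g)
    {n ℓ : ℕ} (x : Fin n → G) (hx : Function.Injective x)
    (c : Fin n → ℂ) (v : Fin ℓ → ℂ) (hv : v ≠ 0) {μ1 : Fin n} (hc : c μ1 ≠ 0) :
    ∃ p : G, (∑ a ∈ Finset.univ.filter
        (fun a : Fin n × Fin ℓ => x a.1 * g ^ ((a.2 : ℕ)) = p), c a.1 * v a.2) ≠ 0 := by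
  classical
  have hzinj : Function.Injective fun m : ℤ => g ^ m :=
    injective_zpow_iff_not_isOfFinOrder.mpr hg
  set T := Finset.univ.filter fun i : Fin ℓ => v i ≠ 0 with hTdef
  have hT : T.Nonempty := by
    rw [Finset.filter_nonempty_iff]
    by_contra h
    push_neg at h
    exact hv (funext fun i => h i (Finset.mem_univ i))
  set i0 := T.max' hT with hi0def
  have hvi0 : v i0 ≠ 0 := (Finset.mem_filter.mp (T.max'_mem hT)).2
  have hi0max : ∀ i ∈ T, i ≤ i0 := fun i hi => T.le_max' i hi
  set S : Set ℤ := {m : ℤ | ∃ ν : Fin n, c ν ≠ 0 ∧ x ν = x μ1 * g ^ m} with hSdef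
  have h0S : (0:ℤ) ∈ S := ⟨μ1, hc, by simp⟩
  have hSfin : S.Finite := by
    have hsub : S ⊆ Set.range (fun ν : Fin n =>
        if h : ∃ m : ℤ, x ν = x μ1 * g ^ m then h.choose else 0) := by
      rintro m ⟨ν, hν, hm⟩
      refine ⟨ν, ?_⟩
      have hex : ∃ m' : ℤ, x ν = x μ1 * g ^ m' := ⟨m, hm⟩
      show (if h : ∃ m' : ℤ, x ν = x μ1 * g ^ m' then h.choose else 0) = m
      rw [dif_pos hex]
      have hsp := hex.choose_spec
      exact hzinj (mul_left_cancel (hsp.symm.trans hm))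
    exact Set.Finite.subset (Set.finite_range _) hsub
  have hFne : hSfin.toFinset.Nonempty := ⟨0, hSfin.mem_toFinset.mpr h0S⟩
  set m0 := hSfin.toFinset.max' hFne with hm0def
  have hm0S : m0 ∈ S := hSfin.mem_toFinset.mp (hSfin.toFinset.max'_mem hFne)
  have hm0max : ∀ m ∈ S, m ≤ m0 := fun m hm =>
    hSfin.toFinset.le_max' m (hSfin.mem_toFinset.mpr hm)
  obtain ⟨ν0, hν0c, hν0x⟩ := hm0S
  refine ⟨x ν0 * g ^ ((i0 : ℕ)), ?_⟩
  refine ne_of_eq_of_ne (Finset.sum_eq_single_of_mem (ν0, i0)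
      (Finset.mem_filter.mpr ⟨Finset.mem_univ _, rfl⟩) ?_) (mul_ne_zero hν0c hvi0)
  rintro ⟨ν, j⟩ hb hne
  simp only [Finset.mem_filter, Finset.mem_univ, true_and] at hb
  by_contra hcontra
  have hcν : c ν ≠ 0 := fun h => hcontra (by rw [h, zero_mul])
  have hvj : v j ≠ 0 := fun h => hcontra (by rw [h, mul_zero])
  have hx1 : x ν = x μ1 * g ^ (m0 + ((i0 : ℕ) : ℤ) - ((j : ℕ) : ℤ)) := by
    have h2 : x ν * g ^ (((j : ℕ) : ℤ)) = x μ1 * g ^ (m0 + ((i0 : ℕ) : ℤ)) := by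
      rw [zpow_natCast, hb, hν0x, zpow_add, zpow_natCast, mul_assoc]
    have h3 : x ν = x μ1 * g ^ (m0 + ((i0 : ℕ) : ℤ)) * (g ^ (((j : ℕ) : ℤ)))⁻¹ :=
      eq_mul_inv_of_mul_eq h2
    rw [h3, mul_assoc, ← zpow_neg, ← zpow_add, sub_eq_add_neg]
  have hmem : (m0 + ((i0 : ℕ) : ℤ) - ((j : ℕ) : ℤ)) ∈ S := ⟨ν, hcν, hx1⟩
  have hle := hm0max _ hmem
  have hji : (i0 : ℕ) ≤ (j : ℕ) := by omega
  have hij : j ≤ i0 := hi0max j (Finset.mem_filter.mpr ⟨Finset.mem_univ _, hvj⟩)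
  have hjeq : j = i0 := le_antisymm hij hji
  have hxeq : x ν = x ν0 := by
    have h4 := hb
    rw [hjeq] at h4
    exact mul_right_cancel h4
  exact hne (Prod.ext (hx hxeq) hjeq)

/-- Let `G` be a locally compact Abelian group that is non torsion and such that
`P⁺(G,ℂ)` is nonempty (there is a continuous translation invariant strictly positive definite
scalar kernel).  Then for every `ℓ ≥ 2` the inclusion `P⁺(G,ℂ^ℓ) ⊆ P⁺_proj(G,ℂ^ℓ)` is strict. -/
theorem stmt_7 {G : Type*} [CommGroup G] [TopologicalSpace G] [IsTopologicalGroup G]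
    [LocallyCompactSpace G]
    (hnt : ∃ g : G, ¬ IsOfFinOrder g)
    (hne : ∃ k : G → G → ℂ,
      (Continuous fun p : G × G => k p.1 p.2) ∧
      (∀ g x y : G, k (g * x) (g * y) = k x y) ∧
      IsSPDKer k) :
    ∀ ℓ : ℕ, 2 ≤ ℓ →
      ∃ K : G → G → Matrix (Fin ℓ) (Fin ℓ) ℂ,
        (Continuous fun p : G × G => K p.1 p.2) ∧
        (∀ g x y : G, K (g * x) (g * y) = K x y) ∧
        (∀ v : Fin ℓ → ℂ, v ≠ 0 → IsSPDKer (projKer K v)) ∧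
        ¬ IsSPDMat K := by
  classical
  obtain ⟨g, hg⟩ := hnt
  obtain ⟨k, hkc, hkinv, hkspd⟩ := hne
  intro ℓ hℓ
  refine ⟨Kmat k g ℓ, ?_, ?_, ?_, ?_⟩
  · -- continuity
    apply continuous_matrix
    intro j i
    exact hkc.comp
      ((continuous_fst.mul continuous_const).prodMk (continuous_snd.mul continuous_const))
  · -- translation invariance
    intro g' x y
    ext j i
    simp only [Kmat, Matrix.of_apply]
    rw [mul_assoc, mul_assoc, hkinv]
  · -- all projections strictly positive definite
    intro v hv
    intro n x hx c hcc
    obtain ⟨μ1, hc1⟩ := hcc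
    have hstep1 : ∀ μ ν : Fin n,
        c μ * (starRingEnd ℂ) (c ν) * projKer (Kmat k g ℓ) v (x μ) (x ν)
          = cip (((Kmat k g ℓ) (x μ) (x ν)).mulVec (c μ • v)) (c ν • v) := by
      intro μ ν
      rw [cip_smul_smul]
      rfl
    have hrw : (∑ μ, ∑ ν, c μ * (starRingEnd ℂ) (c ν) * projKer (Kmat k g ℓ) v (x μ) (x ν))
        = ∑ a : Fin n × Fin ℓ, ∑ b : Fin n × Fin ℓ,
            (c a.1 * v a.2) * (starRingEnd ℂ) (c b.1 * v b.2)
              * k (x a.1 * g ^ ((a.2 : ℕ))) (x b.1 * g ^ ((b.2 : ℕ))) := by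
      calc (∑ μ, ∑ ν, c μ * (starRingEnd ℂ) (c ν) * projKer (Kmat k g ℓ) v (x μ) (x ν))
          = ∑ μ, ∑ ν, cip (((Kmat k g ℓ) (x μ) (x ν)).mulVec ((fun μ => c μ • v) μ))
              ((fun μ => c μ • v) ν) :=
            Finset.sum_congr rfl fun μ _ => Finset.sum_congr rfl fun ν _ => hstep1 μ ν
        _ = _ := by
            rw [expand_sum k g x (fun μ => c μ • v)]
            exact Finset.sum_congr rfl fun a _ => Finset.sum_congr rfl fun b _ => by
              simp only [Pi.smul_apply, smul_eq_mul]
      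
    rw [hrw]
    set y : Fin n × Fin ℓ → G := fun a => x a.1 * g ^ ((a.2 : ℕ)) with hy
    set d : Fin n × Fin ℓ → ℂ := fun a => c a.1 * v a.2 with hd
    rw [show (∑ a : Fin n × Fin ℓ, ∑ b : Fin n × Fin ℓ,
        (c a.1 * v a.2) * (starRingEnd ℂ) (c b.1 * v b.2)
          * k (x a.1 * g ^ ((a.2 : ℕ))) (x b.1 * g ^ ((b.2 : ℕ))))
        = ∑ a, ∑ b, d a * (starRingEnd ℂ) (d b) * k (y a) (y b) from rfl]
    rw [regroup y d k]
    apply spd_finset hkspd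
    obtain ⟨p, hp⟩ := key_nonzero hg x hx c v hv hc1
    refine ⟨p, ?_, hp⟩
    by_contra hpn
    apply hp
    rw [Finset.filter_eq_empty_iff.mpr, Finset.sum_empty]
    intro a _
    exact fun hpa => hpn (hpa ▸ Finset.mem_image_of_mem y (Finset.mem_univ a))
  · -- not strictly positive definite as a matrix kernel
    intro hspd
    have hg1 : g ≠ 1 := fun h => hg (h ▸ IsOfFinOrder.one)
    set x : Fin 2 → G := fun μ => if μ = 0 then 1 else g with hxdef
    have hxinj : Function.Injective x := by
      intro a b hab
      by_cases ha : a = 0 <;> by_cases hb : b = 0 <;>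
        simp only [hxdef, ha, hb, if_pos, if_neg, ite_true, ite_false] at hab <;>
        first
          | (subst ha; subst hb; rfl)
          | omega
          | (exact absurd hab.symm hg1)
          | (exact absurd hab hg1)
    have h2ℓ : 1 < ℓ := by omega
    have h0ℓ : 0 < ℓ := by omega
    set i1 : Fin ℓ := ⟨1, h2ℓ⟩ with hi1
    set i0 : Fin ℓ := ⟨0, h0ℓ⟩ with hi0
    have hi01 : i0 ≠ i1 := by
      intro h
      have := congrArg Fin.val h
      simp [hi0, hi1] at this
    set w : Fin 2 → Fin ℓ → ℂ :=
      fun μ => if μ = 0 then (fun i => if i = i1 then 1 else 0)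
        else (fun i => if i = i0 then -1 else 0) with hwdef
    have hw : ∃ μ, w μ ≠ 0 := by
      refine ⟨0, fun h => ?_⟩
      have h2 := congrFun h i1
      simp [hwdef] at h2
    have hpos := hspd 2 x hxinj w hw
    rw [expand_sum k g x w] at hpos
    have hpoint : ∀ a : Fin 2 × Fin ℓ, w a.1 a.2 ≠ 0 → x a.1 * g ^ ((a.2 : ℕ)) = g := by
      rintro ⟨μ, i⟩ h
      by_cases hμ : μ = 0
      · have hii : i = i1 := by
          by_contra hii
          simp [hwdef, hμ, hii] at h
        simp only [hxdef, hμ, ite_true, hii, hi1]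
        rw [one_mul, pow_one]
      · have hii : i = i0 := by
          by_contra hii
          simp [hwdef, hμ, hii] at h
        simp only [hxdef, hμ, ite_false, hii, hi0]
        rw [pow_zero, mul_one]
    have hterm : ∀ a b : Fin 2 × Fin ℓ,
        w a.1 a.2 * (starRingEnd ℂ) (w b.1 b.2)
            * k (x a.1 * g ^ ((a.2 : ℕ))) (x b.1 * g ^ ((b.2 : ℕ)))
          = w a.1 a.2 * (starRingEnd ℂ) (w b.1 b.2) * k g g := by
      intro a b
      rcases eq_or_ne (w a.1 a.2) 0 with h | h
      · rw [h]; ring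
      rcases eq_or_ne (w b.1 b.2) 0 with h' | h'
      · rw [h', map_zero]; ring
      rw [hpoint a h, hpoint b h']
    have hsum0 : (∑ a : Fin 2 × Fin ℓ, w a.1 a.2) = 0 := by
      rw [Fintype.sum_prod_type, Fin.sum_univ_two]
      have e1 : (∑ i : Fin ℓ, w 0 i) = 1 := by
        simp [hwdef, Finset.sum_ite_eq']
      have e2 : (∑ i : Fin ℓ, w 1 i) = -1 := by
        have h10 : (1 : Fin 2) ≠ 0 := by omega
        simp [hwdef, h10, Finset.sum_ite_eq']
      rw [e1, e2, add_neg_cancel]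
    have hzero : (∑ a : Fin 2 × Fin ℓ, ∑ b : Fin 2 × Fin ℓ,
        w a.1 a.2 * (starRingEnd ℂ) (w b.1 b.2)
          * k (x a.1 * g ^ ((a.2 : ℕ))) (x b.1 * g ^ ((b.2 : ℕ)))) = 0 := by
      calc (∑ a : Fin 2 × Fin ℓ, ∑ b : Fin 2 × Fin ℓ,
          w a.1 a.2 * (starRingEnd ℂ) (w b.1 b.2)
            * k (x a.1 * g ^ ((a.2 : ℕ))) (x b.1 * g ^ ((b.2 : ℕ))))
          = ∑ a : Fin 2 × Fin ℓ, ∑ b : Fin 2 × Fin ℓ,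
              w a.1 a.2 * (starRingEnd ℂ) (w b.1 b.2) * k g g :=
            Finset.sum_congr rfl fun a _ => Finset.sum_congr rfl fun b _ => hterm a b
        _ = (∑ a : Fin 2 × Fin ℓ, w a.1 a.2)
              * (∑ b : Fin 2 × Fin ℓ, (starRingEnd ℂ) (w b.1 b.2)) * k g g :=
            (prodsum _ _ _ _ _).symm
        _ = 0 := by rw [hsum0, zero_mul, zero_mul]
    rw [hzero] at hpos
    exact lt_irrefl 0 hpos
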